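/- arXiv:2002.06706 — 2 statements merged into one kernel-verified Lean document; each statement's English description precedes it below -/
import Mathlib

section
/- Let D, F, K be nonempty HN data such that: D is semistable, K is not semistable, μ_max(D) < μ_min(F), rk(D) = rk(K) and deg(D) = deg(K). Then P_{F⊕K}(k) ≥ P_{F⊕D}(k) for every integer 0 ≤ k ≤ rk(F) + rk(K), and for every integer k with 0 < k < rk(F) + rk(K) equality P_{F⊕K}(k) = P_{F⊕D}(k) holds if and only if k ≤ rk(F^{≥ μ_max(K)}); that is, the HN polygon of F ⊕ K lies on or above that of F ⊕ D, and the common part of the two polygons is exactly the HN polygon of F^{≥ μ_max(K)} together with the right endpoint. -/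
namespace HN

def slope (v : ℤ × ℤ) : ℚ := (v.2 : ℚ) / (v.1 : ℚ)

def cross (v w : ℤ × ℤ) : ℤ := v.1 * w.2 - v.2 * w.1

def IsHNDatum (E : List (ℤ × ℤ)) : Prop :=
  (∀ v ∈ E, 1 ≤ v.1) ∧ E.Pairwise (fun v w => slope w < slope v)

def rk (E : List (ℤ × ℤ)) : ℤ := (E.map Prod.fst).sum

def deg (E : List (ℤ × ℤ)) : ℤ := (E.map Prod.snd).sum

def delta (E F : List (ℤ × ℤ)) : ℤ :=
  (E.map fun e => ((F.filter fun f => decide (slope e ≤ slope f)).map fun f => cross e f).sum).sum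

def geSlope (E : List (ℤ × ℤ)) (μ : ℚ) : List (ℤ × ℤ) := E.filter fun v => decide (μ ≤ slope v)
def gtSlope (E : List (ℤ × ℤ)) (μ : ℚ) : List (ℤ × ℤ) := E.filter fun v => decide (μ < slope v)
def ltSlope (E : List (ℤ × ℤ)) (μ : ℚ) : List (ℤ × ℤ) := E.filter fun v => decide (slope v < μ)

def sigmaList (E : List (ℤ × ℤ)) : List ℚ :=
  E.flatMap fun v => List.replicate v.1.toNat (slope v)

def sigmaSlope (E : List (ℤ × ℤ)) (i : ℕ) : ℚ := (sigmaList E).getD (i - 1) 0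

def poly (E : List (ℤ × ℤ)) (k : ℕ) : ℚ := ((sigmaList E).take k).sum

def polySum (A B : List (ℤ × ℤ)) (k : ℕ) : ℚ :=
  (((sigmaList A ++ sigmaList B).mergeSort fun a b => decide (b ≤ a)).take k).sum

def SlopewiseDom (E F : List (ℤ × ℤ)) : Prop :=
  ∀ μ : ℚ, rk (geSlope F μ) ≤ rk (geSlope E μ)

def StrongSlopewiseDom (E F : List (ℤ × ℤ)) : Prop :=
  SlopewiseDom E F ∧ ∀ μ : ℚ, rk (geSlope E μ) = rk (geSlope F μ) → geSlope E μ = geSlope F μ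

def dual (E : List (ℤ × ℤ)) : List (ℤ × ℤ) := (E.map fun v => (v.1, -v.2)).reverse

def HNleSum (E A B : List (ℤ × ℤ)) : Prop :=
  rk E = rk A + rk B ∧ deg E = deg A + deg B ∧
    ∀ k : ℕ, (k : ℤ) ≤ rk E → poly E k ≤ polySum A B k

def HasVertex (V : List (ℤ × ℤ)) (j : ℕ) : Prop :=
  (j : ℤ) = rk V ∨ sigmaSlope V (j + 1) < sigmaSlope V j

/-- sum of any sub-multiset of a descending-sorted list is at most the sum of a prefix
of the same size. -/
lemma sum_le_take {l : List ℚ} (hl : l.Pairwise (fun a b => b ≤ a)) :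
    ∀ T : Multiset ℚ, T ≤ ↑l → T.sum ≤ ((l.take (Multiset.card T)).sum) := by
  induction l with
  | nil =>
    intro T hT
    have : T = 0 := le_antisymm (by simpa using hT) (zero_le)
    simp [this]
  | cons a l ih =>
    intro T hT
    have ha : ∀ b ∈ l, b ≤ a := fun b hb => List.rel_of_pairwise_cons hl hb
    have hl' := hl.of_cons
    by_cases hmem : a ∈ T
    · obtain ⟨T', rfl⟩ := Multiset.exists_cons_of_mem hmem
      have hT' : T' ≤ ↑l := by
        rw [show ((a :: l : List ℚ) : Multiset ℚ) = a ::ₘ ↑l by simp] at hT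
        exact (Multiset.cons_le_cons_iff a).1 hT
      have := ih hl' T' hT'
      simp only [Multiset.card_cons, Multiset.sum_cons]
      rw [List.take_succ_cons, List.sum_cons]
      linarith
    · have hTl : T ≤ ↑l := by
        rw [Multiset.le_iff_count]
        intro x
        have := Multiset.le_iff_count.1 hT x
        rcases eq_or_ne x a with rfl | hxa
        · simp [Multiset.count_eq_zero_of_notMem hmem]
        · simpa [Multiset.count_cons, hxa, List.count_cons, Ne.symm hxa] using this
      have hsum := ih hl' T hTl
      have hcard : Multiset.card T ≤ l.length := by
        simpa using Multiset.card_le_card hTl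
      rcases Nat.eq_zero_or_pos (Multiset.card T) with h0 | h0
      · have : T = 0 := Multiset.card_eq_zero.1 h0
        simp [this]
      · obtain ⟨n, hn⟩ : ∃ n, Multiset.card T = n + 1 :=
          ⟨Multiset.card T - 1, by omega⟩
        rw [hn, List.take_succ_cons, List.sum_cons]
        have hlt : n < l.length := by omega
        have h1 : (l.take (n+1)).sum = (l.take n).sum + l[n] := List.sum_take_succ l n hlt
        have h2 : l[n] ≤ a := ha _ (List.getElem_mem hlt)
        have h3 : (l.take n).sum ≤ (l.take (n+1)).sum - l[n] := by rw [h1]; ring_nf; linarith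
        have := ih hl' T hTl
        rw [hn] at this
        linarith [this, h1, h2]


lemma sorted_sortD (l : List ℚ) :
    (l.mergeSort fun a b => decide (b ≤ a)).Pairwise (fun a b => b ≤ a) := by
  have := List.pairwise_mergeSort (le := fun a b : ℚ => decide (b ≤ a))
    (fun a b c h1 h2 => by simp_all; linarith)
    (fun a b => by simp [le_total b a]) l
  simpa using this

lemma perm_sortD (l : List ℚ) :
    (l.mergeSort fun a b => decide (b ≤ a)).Perm l := List.mergeSort_perm l _

lemma sortD_of_sorted {l : List ℚ} (h : l.Pairwise (fun a b => b ≤ a)) :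
    (l.mergeSort fun a b => decide (b ≤ a)) = l := by
  apply List.mergeSort_of_pairwise
  simpa using h

/-- lower bound: any split of k into prefixes gives a lower bound for the top-k sum. -/
lemma split_le_top (l₁ l₂ : List ℚ) {i j : ℕ} (hi : i ≤ l₁.length) (hj : j ≤ l₂.length) :
    (l₁.take i).sum + (l₂.take j).sum ≤
      (((l₁ ++ l₂).mergeSort fun a b => decide (b ≤ a)).take (i + j)).sum := by
  set s := (l₁ ++ l₂).mergeSort fun a b => decide (b ≤ a) with hs
  have hsort := sorted_sortD (l₁ ++ l₂)
  have hperm : s.Perm (l₁ ++ l₂) := perm_sortD _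
  have hsub : (l₁.take i ++ l₂.take j).Sublist (l₁ ++ l₂) :=
    (List.take_sublist i l₁).append (List.take_sublist j l₂)
  have hle : (↑(l₁.take i ++ l₂.take j) : Multiset ℚ) ≤ ↑s := by
    rw [Multiset.coe_le]
    exact hsub.subperm.trans hperm.symm.subperm
  have hcard : Multiset.card (↑(l₁.take i ++ l₂.take j) : Multiset ℚ) = i + j := by
    simp [List.length_take, Nat.min_eq_left hi, Nat.min_eq_left hj]
  have := sum_le_take hsort _ hle
  rw [hcard] at this
  simpa using this

/-- upper bound: the top-k sum is at most some split of prefix sums. -/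
lemma top_le_split {l₁ l₂ : List ℚ} (h₁ : l₁.Pairwise (fun a b => b ≤ a))
    (h₂ : l₂.Pairwise (fun a b => b ≤ a)) {k : ℕ} (hk : k ≤ l₁.length + l₂.length) :
    ∃ i j, i + j = k ∧ i ≤ l₁.length ∧ j ≤ l₂.length ∧
      (((l₁ ++ l₂).mergeSort fun a b => decide (b ≤ a)).take k).sum ≤
        (l₁.take i).sum + (l₂.take j).sum := by
  set s := (l₁ ++ l₂).mergeSort fun a b => decide (b ≤ a) with hs
  have hperm : s.Perm (l₁ ++ l₂) := perm_sortD _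
  have hslen : s.length = l₁.length + l₂.length := by
    simpa using hperm.length_eq
  set T : Multiset ℚ := ↑(s.take k) with hT
  have hTle : T ≤ ↑l₁ + ↑l₂ := by
    have h1 : T ≤ ↑s := by
      rw [hT, Multiset.coe_le]
      exact (List.take_sublist k s).subperm
    have h2 : (↑s : Multiset ℚ) = ↑l₁ + ↑l₂ := by
      exact (Multiset.coe_eq_coe.2 hperm).trans (by simp)
    rwa [h2] at h1
  set T₁ : Multiset ℚ := T - ↑l₂ with hT₁
  set T₂ : Multiset ℚ := T ∩ ↑l₂ with hT₂
  have hsplit : T₁ + T₂ = T := Multiset.sub_add_inter T ↑l₂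
  have hT₁le : T₁ ≤ ↑l₁ := Multiset.sub_le_iff_le_add.2 hTle
  have hT₂le : T₂ ≤ ↑l₂ := Multiset.inter_le_right
  refine ⟨Multiset.card T₁, Multiset.card T₂, ?_, ?_, ?_, ?_⟩
  · rw [← Multiset.card_add, hsplit, hT]
    simp [List.length_take, hslen]
    omega
  · simpa using Multiset.card_le_card hT₁le
  · simpa using Multiset.card_le_card hT₂le
  · have e1 := sum_le_take h₁ T₁ hT₁le
    have e2 := sum_le_take h₂ T₂ hT₂le
    have : (s.take k).sum = T₁.sum + T₂.sum := by
      rw [← Multiset.sum_add, hsplit, hT]; simp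
    rw [this]
    exact add_le_add e1 e2


/-- strict chord inequality for a descending sorted list that is not constant. -/
lemma chord_strict {l : List ℚ} (hl : l.Pairwise (fun a b => b ≤ a))
    {a : ℚ} {t : List ℚ} (hlat : l = a :: t) (hne : ∃ y ∈ t, y < a)
    {j : ℕ} (h0 : 0 < j) (hj : j < l.length) :
    (j : ℚ) * l.sum < (l.length : ℚ) * (l.take j).sum := by
  have hd : l.drop j ≠ [] := by
    intro h
    have : (l.drop j).length = l.length - j := List.length_drop
    rw [h] at this
    simp at this
    omega
  set c := (l.drop j).head hd with hc
  have hcd : c ∈ l.drop j := List.head_mem hd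
  have htc : ∀ x ∈ l.take j, c ≤ x := fun x hx =>
    hl.rel_of_mem_take_of_mem_drop hx hcd
  have hdc : ∀ y ∈ l.drop j, y ≤ c := by
    intro y hy
    have hdp : (l.drop j).Pairwise (fun a b => b ≤ a) := hl.drop
    rw [← List.cons_head_tail hd] at hy hdp
    rcases List.mem_cons.1 hy with rfl | hy'
    · exact le_refl _
    · exact List.rel_of_pairwise_cons hdp hy'
  set A := (l.take j).sum with hA
  set B := (l.drop j).sum with hB
  have hS : l.sum = A + B := by
    rw [hA, hB, ← List.sum_append, List.take_append_drop]
  have lenA : (l.take j).length = j := by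
    rw [List.length_take]; omega
  have lenB : (l.drop j).length = l.length - j := List.length_drop
  have hAc : (j : ℚ) * c ≤ A := by
    have := List.card_nsmul_le_sum (l.take j) c htc
    rwa [lenA, nsmul_eq_mul] at this
  have hBc : B ≤ ((l.length - j : ℕ) : ℚ) * c := by
    have := List.sum_le_card_nsmul (l.drop j) c hdc
    rwa [lenB, nsmul_eq_mul] at this
  have hmem_a : a ∈ l.take j := by
    rw [hlat]
    obtain ⟨j', rfl⟩ : ∃ j', j = j' + 1 := ⟨j - 1, by omega⟩
    simp [List.take_succ_cons]
  have hca : c ≤ a := htc a hmem_a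
  have hncast : (l.length : ℚ) = (j : ℚ) + ((l.length - j : ℕ) : ℚ) := by
    push_cast [Nat.cast_sub (le_of_lt hj)]
    ring
  have hm0 : (0 : ℚ) < ((l.length - j : ℕ) : ℚ) := by
    have : 0 < l.length - j := by omega
    exact_mod_cast this
  have hj0 : (0 : ℚ) < (j : ℚ) := by exact_mod_cast h0
  by_cases hlt : c < a
  · -- A > j * c
    have htake : l.take j = a :: t.take (j - 1) := by
      rw [hlat]
      obtain ⟨j', rfl⟩ : ∃ j', j = j' + 1 := ⟨j - 1, by omega⟩
      simp [List.take_succ_cons]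
    have hrest : ((j - 1 : ℕ) : ℚ) * c ≤ (t.take (j - 1)).sum := by
      have hsub : ∀ x ∈ t.take (j - 1), c ≤ x := by
        intro x hx
        apply htc
        rw [htake]
        exact List.mem_cons_of_mem _ hx
      have hlen : (t.take (j - 1)).length = j - 1 := by
        rw [List.length_take]
        have : l.length = t.length + 1 := by rw [hlat]; simp
        omega
      have := List.card_nsmul_le_sum (t.take (j - 1)) c hsub
      rwa [hlen, nsmul_eq_mul] at this
    have hAgt : (j : ℚ) * c < A := by
      have hAeq : A = a + (t.take (j - 1)).sum := by rw [hA, htake, List.sum_cons]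
      have hjcast : ((j - 1 : ℕ) : ℚ) = (j : ℚ) - 1 := by
        push_cast [Nat.cast_sub (by omega : 1 ≤ j)]
        ring
      rw [hjcast] at hrest
      rw [hAeq]
      nlinarith
    have h1 : ((l.length - j : ℕ) : ℚ) * ((j:ℚ) * c) < ((l.length - j : ℕ) : ℚ) * A :=
      mul_lt_mul_of_pos_left hAgt hm0
    have h2 : (j : ℚ) * B ≤ (j : ℚ) * (((l.length - j : ℕ) : ℚ) * c) :=
      mul_le_mul_of_nonneg_left hBc (le_of_lt hj0)
    rw [hS, hncast]
    nlinarith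
  · -- c = a, strictness in B
    have hceq : c = a := le_antisymm hca (not_lt.1 hlt)
    obtain ⟨y0, hy0t, hy0lt⟩ := hne
    have hy0l : y0 ∈ l := by rw [hlat]; exact List.mem_cons_of_mem _ hy0t
    have hy0drop : y0 ∈ l.drop j := by
      have hy0' : y0 ∈ l.take j ++ l.drop j := by
        rw [List.take_append_drop]; exact hy0l
      rcases List.mem_append.1 hy0' with h | h
      · exact absurd (htc y0 h) (by rw [hceq]; exact not_le.2 hy0lt)
      · exact h
    obtain ⟨s, u, hsu⟩ := List.append_of_mem hy0drop
    have hBlt : B < ((l.length - j : ℕ) : ℚ) * c := by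
      have hsum : B = s.sum + (y0 + u.sum) := by
        rw [hB, hsu]; simp
      have hs : s.sum ≤ (s.length : ℚ) * c := by
        have := List.sum_le_card_nsmul s c (fun x hx => hdc x (by rw [hsu]; simp [hx]))
        rwa [nsmul_eq_mul] at this
      have hu : u.sum ≤ (u.length : ℚ) * c := by
        have := List.sum_le_card_nsmul u c (fun x hx => hdc x (by rw [hsu]; simp [hx]))
        rwa [nsmul_eq_mul] at this
      have hlen : ((l.length - j : ℕ) : ℚ) = (s.length : ℚ) + (u.length : ℚ) + 1 := by
        have : l.length - j = s.length + 1 + u.length := by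
          rw [← lenB, hsu]; simp; omega
        rw [this]; push_cast; ring
      rw [hsum, hlen, hceq]
      have : y0 < c := by rw [hceq]; exact hy0lt
      rw [hceq] at hs hu this
      nlinarith
    have h1 : ((l.length - j : ℕ) : ℚ) * ((j:ℚ) * c) ≤ ((l.length - j : ℕ) : ℚ) * A :=
      mul_le_mul_of_nonneg_left hAc (le_of_lt hm0)
    have h2 : (j : ℚ) * B < (j : ℚ) * (((l.length - j : ℕ) : ℚ) * c) :=
      mul_lt_mul_of_pos_left hBlt hj0
    rw [hS, hncast]
    nlinarith


lemma mem_sigma {E : List (ℤ × ℤ)} {x : ℚ} (hx : x ∈ sigmaList E) :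
    ∃ v ∈ E, x = slope v := by
  obtain ⟨v, hv, hx'⟩ := List.mem_flatMap.1 hx
  exact ⟨v, hv, List.eq_of_mem_replicate hx'⟩

lemma slope_mem_sigma {E : List (ℤ × ℤ)} {v : ℤ × ℤ} (hv : v ∈ E) (h1 : 1 ≤ v.1) :
    slope v ∈ sigmaList E :=
  List.mem_flatMap.2 ⟨v, hv, List.mem_replicate.2 ⟨by omega, rfl⟩⟩

lemma sigma_sorted {E : List (ℤ × ℤ)} (hE : IsHNDatum E) :
    (sigmaList E).Pairwise (fun a b => b ≤ a) := by
  obtain ⟨-, hp⟩ := hE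
  induction E with
  | nil => simp [sigmaList]
  | cons v E ih =>
    rw [List.pairwise_cons] at hp
    have : sigmaList (v :: E) = List.replicate v.1.toNat (slope v) ++ sigmaList E := by
      simp [sigmaList]
    rw [this, List.pairwise_append]
    refine ⟨List.pairwise_replicate.2 (Or.inr le_rfl), ih hp.2, ?_⟩
    intro x hx y hy
    obtain rfl := List.eq_of_mem_replicate hx
    obtain ⟨w, hw, rfl⟩ := mem_sigma hy
    exact le_of_lt (hp.1 w hw)

lemma sigma_length {E : List (ℤ × ℤ)} (hE : ∀ v ∈ E, 1 ≤ v.1) :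
    ((sigmaList E).length : ℤ) = rk E := by
  induction E with
  | nil => simp [sigmaList, rk]
  | cons v E ih =>
    have h1 : 1 ≤ v.1 := hE v (List.mem_cons_self)
    have := ih (fun w hw => hE w (List.mem_cons_of_mem _ hw))
    simp only [sigmaList, List.flatMap_cons, List.length_append, List.length_replicate, rk,
      List.map_cons, List.sum_cons]
    push_cast
    rw [Int.toNat_of_nonneg (by omega)]
    simp only [sigmaList, rk] at this
    omega

lemma sigma_sum {E : List (ℤ × ℤ)} (hE : ∀ v ∈ E, 1 ≤ v.1) :
    (sigmaList E).sum = (deg E : ℚ) := by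
  induction E with
  | nil => simp [sigmaList, deg]
  | cons v E ih =>
    have h1 : 1 ≤ v.1 := hE v (List.mem_cons_self)
    have hrec := ih (fun w hw => hE w (List.mem_cons_of_mem _ hw))
    have hsig : sigmaList (v :: E) = List.replicate v.1.toNat (slope v) ++ sigmaList E := by
      simp [sigmaList]
    have hdeg : (deg (v :: E) : ℚ) = (v.2 : ℚ) + (deg E : ℚ) := by
      simp [deg]
    rw [hsig, List.sum_append, hrec, hdeg, List.sum_replicate, nsmul_eq_mul]
    have hcast : ((v.1.toNat : ℕ) : ℚ) = ((v.1 : ℤ) : ℚ) := by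
      exact_mod_cast congrArg (fun z : ℤ => (z : ℚ)) (Int.toNat_of_nonneg (by omega : (0:ℤ) ≤ v.1))
    have hne : (v.1 : ℚ) ≠ 0 := by
      have : (1 : ℚ) ≤ (v.1 : ℚ) := by exact_mod_cast h1
      linarith
    rw [hcast]
    unfold slope
    field_simp

lemma sigma_geSlope (E : List (ℤ × ℤ)) (μ : ℚ) :
    sigmaList (geSlope E μ) = (sigmaList E).filter (fun x => decide (μ ≤ x)) := by
  induction E with
  | nil => simp [sigmaList, geSlope]
  | cons v E ih =>
    simp only [sigmaList, geSlope, List.flatMap_cons, List.filter_append, List.filter_replicate]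
    by_cases h : μ ≤ slope v
    · rw [List.filter_cons_of_pos (by simpa using h)]
      simp only [sigmaList, List.flatMap_cons]
      rw [if_pos (by simpa using h)]
      simp only [geSlope, sigmaList] at ih
      rw [ih]
    · rw [List.filter_cons_of_neg (by simpa using h)]
      rw [if_neg (by simpa using h)]
      simp only [geSlope, sigmaList] at ih
      rw [ih]
      simp

lemma filter_eq_takeWhile {l : List ℚ} (hl : l.Pairwise (fun a b => b ≤ a)) (μ : ℚ) :
    l.filter (fun x => decide (μ ≤ x)) = l.takeWhile (fun x => decide (μ ≤ x)) := by
  induction l with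
  | nil => simp
  | cons a t ih =>
    have ha : ∀ b ∈ t, b ≤ a := fun b hb => List.rel_of_pairwise_cons hl hb
    by_cases h : μ ≤ a
    · rw [List.filter_cons_of_pos (by simpa using h),
        List.takeWhile_cons_of_pos (by simpa using h), ih hl.of_cons]
    · rw [List.filter_cons_of_neg (by simpa using h),
        List.takeWhile_cons_of_neg (by simpa using h)]
      apply List.filter_eq_nil_iff.2
      intro x hx
      simp only [decide_eq_true_eq]
      intro hμx
      exact h (le_trans hμx (ha x hx))

/-- elements of a prefix within the takeWhile region satisfy the predicate. -/
lemma mem_take_of_takeWhile {l : List ℚ} {p : ℚ → Bool} {k : ℕ}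
    (hk : k ≤ (l.takeWhile p).length) {x : ℚ} (hx : x ∈ l.take k) : p x = true := by
  have : l.take k = (l.takeWhile p).take k := by
    conv_lhs => rw [← (List.takeWhile_append_dropWhile : l.takeWhile p ++ l.dropWhile p = l)]
    exact List.take_append_of_le_length hk
  rw [this] at hx
  exact List.mem_takeWhile_imp (List.take_subset k _ hx)

/-- elements at positions past the takeWhile region of a sorted list fail μ ≤ ·. -/
lemma getElem_lt_of_past_takeWhile {l : List ℚ} (hl : l.Pairwise (fun a b => b ≤ a))
    {μ : ℚ} {i : ℕ} (hi : i < l.length)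
    (hpast : (l.takeWhile (fun x => decide (μ ≤ x))).length ≤ i) :
    l[i] < μ := by
  set p : ℚ → Bool := fun x => decide (μ ≤ x) with hp
  set mN := (l.takeWhile p).length with hmN
  have hdw : l.drop mN = l.dropWhile p := by
    conv_lhs => rw [← (List.takeWhile_append_dropWhile : l.takeWhile p ++ l.dropWhile p = l)]
    rw [List.drop_left' rfl]
  have hdne : l.drop mN ≠ [] := by
    intro h
    have := congrArg List.length h
    rw [List.length_drop] at this
    simp at this
    omega
  have hdne' : l.dropWhile p ≠ [] := by rw [← hdw]; exact hdne
  set c := (l.dropWhile p).head hdne' with hc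
  have hcfail : ¬ (μ ≤ c) := by
    have := List.head_dropWhile_not p hdne'
    simpa [hp] using this
  have hmemi : l[i] ∈ l.drop mN := by
    have hilt : i - mN < (l.drop mN).length := by
      rw [List.length_drop]; omega
    have h2 : (l.drop mN)[i - mN] = l[i] := by
      rw [List.getElem_drop]
      congr 1
      omega
    exact h2 ▸ List.getElem_mem hilt
  have hdp : (l.drop mN).Pairwise (fun a b => b ≤ a) := hl.drop
  have hlec : l[i] ≤ c := by
    rw [hdw] at hmemi hdp
    rw [← List.cons_head_tail hdne'] at hmemi hdp
    rcases List.mem_cons.1 hmemi with h | h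
    · rw [h]
    · exact List.rel_of_pairwise_cons hdp h
  have : c < μ := not_le.1 hcfail
  linarith


lemma pairwise_getLast_le {l : List (ℤ × ℤ)}
    (h : l.Pairwise (fun v w => slope w < slope v)) (hne : l ≠ []) :
    ∀ v ∈ l, slope (l.getLast hne) ≤ slope v := by
  induction l with
  | nil => exact absurd rfl hne
  | cons a t ih =>
    intro v hv
    by_cases ht : t = []
    · subst ht
      obtain rfl : v = a := by simpa using hv
      exact le_refl _
    · rw [List.getLast_cons ht]
      rcases List.mem_cons.1 hv with rfl | hv'
      · exact le_of_lt (List.rel_of_pairwise_cons h (List.getLast_mem ht))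
      · exact ih h.of_cons ht v hv'


/-- For D semistable, K not semistable, μ_max(D) < μ_min(F), rk(D) = rk(K),
deg(D) = deg(K): the polygon of F ⊕ K lies on or above that of F ⊕ D, and the
common part is exactly the polygon of F^{≥ μ_max(K)} (plus the right endpoint). -/
theorem statement9 (D F K : List (ℤ × ℤ))
    (hD : IsHNDatum D) (hF : IsHNDatum F) (hK : IsHNDatum K)
    (hDne : D ≠ []) (hFne : F ≠ []) (hKne : K ≠ [])
    (hDss : D.length ≤ 1) (hKnss : ¬ K.length ≤ 1)
    (hslope : slope (D.head hDne) < slope (F.getLast hFne))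
    (hrk : rk D = rk K) (hdeg : deg D = deg K) :
    (∀ k : ℕ, (k : ℤ) ≤ rk F + rk K → polySum F D k ≤ polySum F K k) ∧
    (∀ k : ℕ, 0 < k → (k : ℤ) < rk F + rk K →
      (polySum F K k = polySum F D k ↔ (k : ℤ) ≤ rk (geSlope F (slope (K.head hKne))))) := by
  -- D is a single entry
  have hDlen : D.length = 1 := le_antisymm hDss (List.length_pos_iff.2 hDne)
  obtain ⟨e, rfl⟩ := List.length_eq_one_iff.1 hDlen
  -- K has at least two entries
  rcases K with _ | ⟨k1, K0⟩
  · exact absurd rfl hKne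
  rcases K0 with _ | ⟨k2, K'⟩
  · simp at hKnss
  set μd := slope e with hμd
  set μ₁ := slope k1 with hμ₁
  set σF := sigmaList F with hσF
  set σK := sigmaList (k1 :: k2 :: K') with hσK
  set nF := σF.length with hnFdef
  set nK := σK.length with hnKdef
  have hF1 : ∀ v ∈ F, 1 ≤ v.1 := hF.1
  have hK1 : ∀ v ∈ (k1 :: k2 :: K'), 1 ≤ v.1 := hK.1
  have he1 : 1 ≤ e.1 := hD.1 e (by simp)
  have hnF : (nF : ℤ) = rk F := sigma_length hF1
  have hnK : (nK : ℤ) = rk (k1 :: k2 :: K') := sigma_length hK1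
  have hsumF : σF.sum = (deg F : ℚ) := sigma_sum hF1
  have hsumK : σK.sum = (deg (k1 :: k2 :: K') : ℚ) := sigma_sum hK1
  have hFsort : σF.Pairwise (fun a b => b ≤ a) := sigma_sorted hF
  have hKsort : σK.Pairwise (fun a b => b ≤ a) := sigma_sorted hK
  have hrkD : rk [e] = e.1 := by simp [rk]
  have hdegD : deg [e] = e.2 := by simp [deg]
  -- σD description
  have hσD : sigmaList [e] = List.replicate e.1.toNat μd := by simp [sigmaList, hμd]
  have hnDnK : (sigmaList [e]).length = nK := by
    have h1 : ((sigmaList [e]).length : ℤ) = rk [e] := sigma_length (by simpa using he1)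
    omega
  have hnK2 : 2 ≤ nK := by
    have h21 : 1 ≤ k1.1 := hK1 k1 (by simp)
    have h22 : 1 ≤ k2.1 := hK1 k2 (by simp)
    have h2 : 2 ≤ (sigmaList (k1 :: k2 :: K')).length := by
      simp only [sigmaList, List.flatMap_cons, List.length_append, List.length_replicate]
      omega
    rw [hnKdef, hσK]
    exact h2
  -- all slopes of F exceed μd
  have hFge : ∀ x ∈ σF, μd ≤ x := by
    intro x hx
    obtain ⟨v, hv, rfl⟩ := mem_sigma hx
    exact le_of_lt (lt_of_lt_of_le hslope (pairwise_getLast_le hF.2 hFne v hv))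
  -- all slopes of K are ≤ μ₁
  have hKle1 : ∀ x ∈ σK, x ≤ μ₁ := by
    intro x hx
    obtain ⟨v, hv, rfl⟩ := mem_sigma hx
    rcases List.mem_cons.1 hv with rfl | hv'
    · exact le_refl _
    · exact le_of_lt (List.rel_of_pairwise_cons hK.2 hv')
  -- σK starts with μ₁
  obtain ⟨tK, htK⟩ : ∃ t, σK = μ₁ :: t := by
    have h21 : 1 ≤ k1.1 := hK1 k1 (by simp)
    obtain ⟨n, hn⟩ : ∃ n, k1.1.toNat = n + 1 := ⟨k1.1.toNat - 1, by omega⟩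
    refine ⟨List.replicate n μ₁ ++ sigmaList (k2 :: K'), ?_⟩
    rw [hσK]
    show sigmaList (k1 :: k2 :: K') = _
    simp only [sigmaList, List.flatMap_cons, hn, List.replicate_succ]
    simp [sigmaList, hμ₁]
  have hKne2 : ∃ y ∈ tK, y < μ₁ := by
    have h22 : 1 ≤ k2.1 := hK1 k2 (by simp)
    have hy : slope k2 ∈ σK := slope_mem_sigma (by simp) h22
    have hlt : slope k2 < μ₁ := List.rel_of_pairwise_cons hK.2 (by simp)
    rw [htK] at hy
    rcases List.mem_cons.1 hy with h | h
    · exact absurd h (ne_of_lt hlt)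
    · exact ⟨slope k2, h, hlt⟩
  -- average of K is μd
  have hkey : σK.sum = (nK : ℚ) * μd := by
    have hne : (e.1 : ℚ) ≠ 0 := by
      have : (1 : ℚ) ≤ (e.1 : ℚ) := by exact_mod_cast he1
      linarith
    have h1 : (deg (k1 :: k2 :: K') : ℚ) = (e.2 : ℚ) := by
      rw [← hdeg, hdegD]
    have h2 : (nK : ℚ) = (e.1 : ℚ) := by
      have : (nK : ℤ) = e.1 := by rw [hnK, ← hrk, hrkD]
      exact_mod_cast this
    rw [hsumK, h1, h2, hμd]
    unfold slope
    field_simp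
  have hnK0 : (0 : ℚ) < (nK : ℚ) := by
    have : 0 < nK := by omega
    exact_mod_cast this
  -- strict chord bound for K
  have hKlow : ∀ j : ℕ, 0 < j → j < nK → (j : ℚ) * μd < (σK.take j).sum := by
    intro j hj0 hjn
    have hch := chord_strict hKsort htK hKne2 hj0 (by omega)
    rw [hkey] at hch
    have h2 : (nK : ℚ) * ((j : ℚ) * μd) < (nK : ℚ) * (σK.take j).sum := by
      calc (nK : ℚ) * ((j : ℚ) * μd) = (j : ℚ) * ((nK : ℚ) * μd) := by ring
        _ < (nK : ℚ) * (σK.take j).sum := hch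
    exact lt_of_mul_lt_mul_left h2 (le_of_lt hnK0)
  have hKweak : ∀ j : ℕ, j ≤ nK → (j : ℚ) * μd ≤ (σK.take j).sum := by
    intro j hjn
    rcases Nat.eq_zero_or_pos j with rfl | hj0
    · simp
    rcases eq_or_lt_of_le hjn with rfl | hlt
    · rw [List.take_length]
      rw [hkey]
    · exact le_of_lt (hKlow j hj0 hlt)
  have htake1 : (σK.take 1).sum = μ₁ := by rw [htK]; simp
  -- polySum F D explicit formula
  have hFDsorted : (σF ++ sigmaList [e]).Pairwise (fun a b => b ≤ a) := by
    rw [List.pairwise_append]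
    refine ⟨hFsort, ?_, ?_⟩
    · rw [hσD]
      exact List.pairwise_replicate.2 (Or.inr le_rfl)
    · intro x hx y hy
      rw [hσD] at hy
      obtain rfl := List.eq_of_mem_replicate hy
      exact hFge x hx
  have hPD : ∀ k : ℕ, polySum F [e] k = ((σF ++ sigmaList [e]).take k).sum := by
    intro k
    unfold polySum
    rw [sortD_of_sorted hFDsorted]
  have hPDlo : ∀ k : ℕ, k ≤ nF → polySum F [e] k = (σF.take k).sum := by
    intro k hk
    rw [hPD, List.take_append_of_le_length hk]
  have hPDhi : ∀ k : ℕ, nF ≤ k → k ≤ nF + nK →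
      polySum F [e] k = σF.sum + ((k - nF : ℕ) : ℚ) * μd := by
    intro k h1 h2
    rw [hPD, List.take_append, List.take_of_length_le h1, List.sum_append]
    congr 1
    rw [hσD, List.take_replicate, List.sum_replicate, nsmul_eq_mul]
    congr 2
    have : (List.replicate e.1.toNat μd).length = nK := by rw [← hσD]; exact hnDnK
    rw [List.length_replicate] at this
    omega
  -- lower bound for polySum F K
  have hPKlo : ∀ i j : ℕ, i ≤ nF → j ≤ nK →
      (σF.take i).sum + (σK.take j).sum ≤ polySum F (k1 :: k2 :: K') (i + j) := by
    intro i j hi hj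
    exact split_le_top σF σK hi hj
  -- the takeWhile bound
  set mN := (σF.takeWhile (fun x => decide (μ₁ ≤ x))).length with hmNdef
  have hmN_le : mN ≤ nF := (List.takeWhile_sublist _).length_le
  have hmrk : rk (geSlope F μ₁) = (mN : ℤ) := by
    have hg1 : ∀ v ∈ geSlope F μ₁, 1 ≤ v.1 := by
      intro v hv
      exact hF1 v (List.mem_of_mem_filter hv)
    have h1 : ((sigmaList (geSlope F μ₁)).length : ℤ) = rk (geSlope F μ₁) :=
      sigma_length hg1
    rw [← h1, sigma_geSlope, filter_eq_takeWhile hFsort]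
  constructor
  · -- part 1
    intro k hk
    have hkN : k ≤ nF + nK := by
      have : (k : ℤ) ≤ (nF : ℤ) + (nK : ℤ) := by rw [hnF, hnK]; exact hk
      exact_mod_cast this
    by_cases hkF : k ≤ nF
    · rw [hPDlo k hkF]
      have := hPKlo k 0 hkF (Nat.zero_le _)
      simpa using this
    · push_neg at hkF
      rw [hPDhi k (le_of_lt hkF) hkN]
      have h1 := hPKlo nF (k - nF) le_rfl (by omega)
      rw [show nF + (k - nF) = k by omega] at h1
      rw [show List.take nF σF = σF from List.take_length] at h1
      have h2 := hKweak (k - nF) (by omega)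
      linarith
  · -- part 2
    intro k hk0 hklt
    have hkN : k < nF + nK := by
      have : (k : ℤ) < (nF : ℤ) + (nK : ℤ) := by rw [hnF, hnK]; exact hklt
      exact_mod_cast this
    show polySum F (k1 :: k2 :: K') k = polySum F [e] k ↔ (k : ℤ) ≤ rk (geSlope F μ₁)
    rw [hmrk]
    constructor
    · -- equality implies k ≤ mN
      intro heq
      by_contra hmk'
      have hmk : mN < k := by
        push_neg at hmk'
        exact_mod_cast hmk'
      have hstrict : polySum F [e] k < polySum F (k1 :: k2 :: K') k := by
        by_cases hkF : k ≤ nF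
        · -- use one element of K of slope μ₁
          have hk1lt : k - 1 < nF := by omega
          have hβ : σF[k-1]'(by omega) < μ₁ :=
            getElem_lt_of_past_takeWhile hFsort (by omega) (by omega)
          have hPDeq : polySum F [e] k = (σF.take (k-1)).sum + σF[k-1]'(by omega) := by
            rw [hPDlo k hkF]
            have hst := List.sum_take_succ σF (k-1) (by omega : k - 1 < σF.length)
            rw [show (k-1)+1 = k by omega] at hst
            exact hst
          have hlow := hPKlo (k-1) 1 (by omega) (by omega)
          rw [show (k-1) + 1 = k by omega, htake1] at hlow
          rw [hPDeq]
          linarith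
        · push_neg at hkF
          have hPDeq := hPDhi k (le_of_lt hkF) (by omega)
          have hlow := hPKlo nF (k - nF) le_rfl (by omega)
          rw [show nF + (k - nF) = k by omega] at hlow
          rw [show List.take nF σF = σF from List.take_length] at hlow
          have hKs := hKlow (k - nF) (by omega) (by omega)
          rw [hPDeq]
          linarith
      rw [heq] at hstrict
      exact lt_irrefl _ hstrict
    · -- k ≤ mN implies equality
      intro hkm'
      have hkm : k ≤ mN := by exact_mod_cast hkm'
      have hkF : k ≤ nF := le_trans hkm hmN_le
      apply le_antisymm
      · -- PK ≤ PD
        obtain ⟨i, j, hij, hiF, hjK, hle⟩ := top_le_split hFsort hKsort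
          (k := k) (by omega)
        rw [hPDlo k hkF]
        have hsplitF : σF.take k = σF.take i ++ (σF.drop i).take j := by
          rw [← hij]; exact List.take_add
        have hmidlen : ((σF.drop i).take j).length = j := by
          rw [List.length_take, List.length_drop]
          omega
        have hmidge : ∀ x ∈ (σF.drop i).take j, μ₁ ≤ x := by
          intro x hx
          have hxk : x ∈ σF.take k := by
            rw [hsplitF]
            exact List.mem_append_right _ hx
          have := mem_take_of_takeWhile (le_trans hkm le_rfl) hxk
          simpa using this
        have hmid : (j : ℚ) * μ₁ ≤ ((σF.drop i).take j).sum := by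
          have := List.card_nsmul_le_sum ((σF.drop i).take j) μ₁ hmidge
          rwa [hmidlen, nsmul_eq_mul] at this
        have hjle : (σK.take j).sum ≤ (j : ℚ) * μ₁ := by
          have hlen : (σK.take j).length = j := by
            rw [List.length_take]; omega
          have := List.sum_le_card_nsmul (σK.take j) μ₁
            (fun x hx => hKle1 x (List.take_subset _ _ hx))
          rwa [hlen, nsmul_eq_mul] at this
        rw [hsplitF, List.sum_append]
        calc polySum F (k1 :: k2 :: K') k ≤ (σF.take i).sum + (σK.take j).sum := hle
          _ ≤ (σF.take i).sum + (j : ℚ) * μ₁ := by linarith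
          _ ≤ (σF.take i).sum + ((σF.drop i).take j).sum := by linarith
      · -- PD ≤ PK
        rw [hPDlo k hkF]
        have := hPKlo k 0 hkF (Nat.zero_le _)
        simpa using this


end HN
end

section
/- Let D, F, V be nonempty HN data with μ_max(D) ≤ μ_min(F), rk(V) = rk(D) + rk(F) and deg(V) = deg(D) + deg(F). Then δ(D, V) − δ(D, F) = δ(V, D) and δ(V, F) − δ(D, F) = δ(F, V). -/
namespace HN

lemma rk_cons (e : ℤ × ℤ) (E : List (ℤ × ℤ)) : rk (e :: E) = e.1 + rk E := by simp [rk]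
lemma deg_cons (e : ℤ × ℤ) (E : List (ℤ × ℤ)) : deg (e :: E) = e.2 + deg E := by simp [deg]

lemma cross_zero_of_slope_eq {e f : ℤ × ℤ} (he : 1 ≤ e.1) (hf : 1 ≤ f.1)
    (h : slope e = slope f) : cross e f = 0 := by
  have he' : (e.1 : ℚ) ≠ 0 := by exact_mod_cast (by omega : e.1 ≠ 0)
  have hf' : (f.1 : ℚ) ≠ 0 := by exact_mod_cast (by omega : f.1 ≠ 0)
  rw [slope, slope, div_eq_div_iff he' hf'] at h
  have h2 : e.2 * f.1 = f.2 * e.1 := by exact_mod_cast h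
  rw [cross, h2]; ring

lemma key (e f : ℤ × ℤ) (he : 1 ≤ e.1) (hf : 1 ≤ f.1) :
    (if slope e ≤ slope f then cross e f else 0)
      - (if slope f ≤ slope e then cross f e else 0) = cross e f := by
  rcases lt_trichotomy (slope e) (slope f) with h | h | h
  · rw [if_pos h.le, if_neg (not_le.mpr h)]; ring
  · rw [if_pos h.le, if_pos h.ge]
    have h0 := cross_zero_of_slope_eq he hf h
    have h1 : cross f e = -(cross e f) := by simp only [cross]; ring
    rw [h1, h0]; ring
  · rw [if_neg (not_le.mpr h), if_pos h.le]
    simp only [cross]; ring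

lemma inner_eq (e : ℤ × ℤ) (F : List (ℤ × ℤ)) :
    ((F.filter fun f => decide (slope e ≤ slope f)).map fun f => cross e f).sum
      = (F.map fun f => if slope e ≤ slope f then cross e f else 0).sum := by
  induction F with
  | nil => simp
  | cons f F ih =>
    by_cases h : slope e ≤ slope f <;> simp [List.filter_cons, h, ih]

def deltaI (E F : List (ℤ × ℤ)) : ℤ :=
  (E.map fun e => (F.map fun f => if slope e ≤ slope f then cross e f else 0).sum).sum

lemma delta_eq_deltaI (E F : List (ℤ × ℤ)) : delta E F = deltaI E F := by
  simp only [delta, deltaI]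
  congr 1
  exact List.map_congr_left fun e _ => inner_eq e F

lemma deltaI_cons_left (e : ℤ × ℤ) (E F : List (ℤ × ℤ)) :
    deltaI (e :: E) F
      = (F.map fun f => if slope e ≤ slope f then cross e f else 0).sum + deltaI E F := by
  simp [deltaI]

lemma deltaI_cons_right (E : List (ℤ × ℤ)) (f : ℤ × ℤ) (F : List (ℤ × ℤ)) :
    deltaI E (f :: F)
      = (E.map fun e => if slope e ≤ slope f then cross e f else 0).sum + deltaI E F := by
  induction E with
  | nil => simp [deltaI]
  | cons e E ih =>
    rw [deltaI_cons_left, deltaI_cons_left, List.map_cons, List.sum_cons, List.map_cons,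
      List.sum_cons, ih]
    ring

lemma sub_eq (e : ℤ × ℤ) (F : List (ℤ × ℤ)) (he : 1 ≤ e.1) (hF : ∀ f ∈ F, 1 ≤ f.1) :
    (F.map fun f => if slope e ≤ slope f then cross e f else 0).sum
      - (F.map fun f => if slope f ≤ slope e then cross f e else 0).sum
      = e.1 * deg F - e.2 * rk F := by
  induction F with
  | nil => simp [deg, rk]
  | cons f F ih =>
    have h1 := key e f he (hF f (List.mem_cons_self))
    have h2 := ih fun g hg => hF g (List.mem_cons_of_mem f hg)
    have hc : cross e f = e.1 * f.2 - e.2 * f.1 := rfl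
    simp only [List.map_cons, List.sum_cons, deg_cons, rk_cons]
    linear_combination h1 + h2 + hc

lemma delta_antisym (E F : List (ℤ × ℤ)) (hE : ∀ e ∈ E, 1 ≤ e.1) (hF : ∀ f ∈ F, 1 ≤ f.1) :
    delta E F - delta F E = rk E * deg F - deg E * rk F := by
  rw [delta_eq_deltaI, delta_eq_deltaI]
  induction E with
  | nil => simp [deltaI, rk, deg]
  | cons e E ih =>
    have h1 := sub_eq e F (hE e (List.mem_cons_self)) hF
    have h2 := ih fun g hg => hE g (List.mem_cons_of_mem e hg)
    rw [deltaI_cons_left, deltaI_cons_right, rk_cons, deg_cons]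
    linear_combination h1 + h2

lemma cross_sum (d : ℤ × ℤ) (F : List (ℤ × ℤ)) :
    (F.map fun f => cross d f).sum = d.1 * deg F - d.2 * rk F := by
  induction F with
  | nil => simp [deg, rk]
  | cons f F ih =>
    simp only [List.map_cons, List.sum_cons, deg_cons, rk_cons, cross] at *
    linear_combination ih

lemma delta_full (D F : List (ℤ × ℤ)) (h : ∀ d ∈ D, ∀ f ∈ F, slope d ≤ slope f) :
    delta D F = rk D * deg F - deg D * rk F := by
  induction D with
  | nil => simp [delta, rk, deg]
  | cons d D ih =>
    have hfilter : (F.filter fun f => decide (slope d ≤ slope f)) = F :=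
      List.filter_eq_self.mpr fun f hf => by
        simpa using h d (List.mem_cons_self) f hf
    have hcons : delta (d :: D) F
        = ((F.filter fun f => decide (slope d ≤ slope f)).map fun f => cross d f).sum
          + delta D F := by simp [delta]
    rw [hcons, hfilter, cross_sum, ih fun g hg f hf => h g (List.mem_cons_of_mem d hg) f hf,
      rk_cons, deg_cons]
    ring

lemma slope_le_head (E : List (ℤ × ℤ)) (hE : E.Pairwise fun v w => slope w < slope v)
    (hne : E ≠ []) : ∀ e ∈ E, slope e ≤ slope (E.head hne) := by
  match E with
  | a :: t =>
    intro e he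
    rcases List.mem_cons.mp he with rfl | h
    · simp
    · exact ((List.pairwise_cons.mp hE).1 e h).le

lemma head_le_of_pairwise (l : List (ℤ × ℤ)) (h : l.Pairwise fun v w => slope v < slope w)
    (hne : l ≠ []) : ∀ e ∈ l, slope (l.head hne) ≤ slope e := by
  match l with
  | a :: t =>
    intro e he
    rcases List.mem_cons.mp he with rfl | h'
    · simp
    · exact ((List.pairwise_cons.mp h).1 e h').le

lemma getLast_slope_le (E : List (ℤ × ℤ)) (hE : E.Pairwise fun v w => slope w < slope v)
    (hne : E ≠ []) : ∀ e ∈ E, slope (E.getLast hne) ≤ slope e := by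
  rw [List.getLast_eq_head_reverse]
  have hrev : E.reverse.Pairwise fun v w => slope v < slope w := by
    rw [List.pairwise_reverse]; exact hE
  intro e he
  exact head_le_of_pairwise E.reverse hrev (by simpa using hne) e (List.mem_reverse.mpr he)

/-- If μ_max(D) ≤ μ_min(F), rk(V) = rk(D) + rk(F) and deg(V) = deg(D) + deg(F),
then δ(D,V) − δ(D,F) = δ(V,D) and δ(V,F) − δ(D,F) = δ(F,V). -/
theorem statement15 (D F V : List (ℤ × ℤ))
    (hD : IsHNDatum D) (hF : IsHNDatum F) (hV : IsHNDatum V)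
    (hDne : D ≠ []) (hFne : F ≠ []) (hVne : V ≠ [])
    (hslope : slope (D.head hDne) ≤ slope (F.getLast hFne))
    (hrk : rk V = rk D + rk F) (hdeg : deg V = deg D + deg F) :
    delta D V - delta D F = delta V D ∧ delta V F - delta D F = delta F V := by
  have hDF : delta D F = rk D * deg F - deg D * rk F := by
    apply delta_full
    intro d hd f hf
    calc slope d ≤ slope (D.head hDne) := slope_le_head D hD.2 hDne d hd
      _ ≤ slope (F.getLast hFne) := hslope
      _ ≤ slope f := getLast_slope_le F hF.2 hFne f hf
  have hDV := delta_antisym D V hD.1 hV.1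
  have hVF := delta_antisym V F hV.1 hF.1
  constructor
  · linear_combination hDV - hDF - deg D * hrk + rk D * hdeg
  · linear_combination hVF - hDF + deg F * hrk - rk F * hdeg

end HN
end
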